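/- With η(x) = a₁/2 + (a₃/6)x + (b₄/24)x² satisfying a₁ > 0, b₄ > 0, a₃² < 3a₁b₄, and l an even nonnegative integer, n^{(l+1)/2} ∫_ℝ x^l exp(−n x² η(x)) dx converges as n → ∞ to √(2π/a₁^{l+1})·E[Z^l], where Z is standard normal. -/

import Mathlib

open MeasureTheory ProbabilityTheory Filter
open scoped NNReal ENNReal

lemma laplace_sqrt_nat_atTop : Tendsto (fun n : ℕ => Real.sqrt n) atTop atTop := by
  refine Filter.tendsto_atTop_atTop.mpr fun b => ⟨⌈b^2⌉₊, fun n hn => ?_⟩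
  have h1 : (b^2 : ℝ) ≤ n := le_trans (Nat.le_ceil _) (by exact_mod_cast hn)
  calc b ≤ |b| := le_abs_self b
    _ = Real.sqrt (b^2) := (Real.sqrt_sq_eq_abs b).symm
    _ ≤ Real.sqrt n := Real.sqrt_le_sqrt h1

lemma laplace_aux_scale (a : ℝ) (ha : 0 < a) (l : ℕ) :
    ∫ y : ℝ, y^l * Real.exp (-(y^2 * (a/2))) =
      ((Real.sqrt a)⁻¹)^(l+1) * ∫ z : ℝ, z^l * Real.exp (-(z^2/2)) := by
  have hs : 0 < Real.sqrt a := Real.sqrt_pos.mpr ha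
  have hs2 : Real.sqrt a ^ 2 = a := Real.sq_sqrt ha.le
  have h2 : (Real.sqrt a)^l ≠ 0 := pow_ne_zero _ hs.ne'
  have key := MeasureTheory.Measure.integral_comp_mul_left
    (fun z : ℝ => z^l * Real.exp (-(z^2/2))) (Real.sqrt a)
  have h1 : ∀ x : ℝ, (Real.sqrt a * x)^l * Real.exp (-((Real.sqrt a * x)^2/2))
      = (Real.sqrt a)^l * (x^l * Real.exp (-(x^2 * (a/2)))) := by
    intro x
    rw [mul_pow, mul_pow, hs2, show a * x ^ 2 / 2 = x ^ 2 * (a / 2) from by ring]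
    ring
  simp only [h1] at key
  rw [integral_const_mul, abs_of_pos (inv_pos.mpr hs), smul_eq_mul] at key
  calc ∫ y : ℝ, y^l * Real.exp (-(y^2 * (a/2)))
      = ((Real.sqrt a)^l)⁻¹ * ((Real.sqrt a)^l * ∫ y : ℝ, y^l * Real.exp (-(y^2 * (a/2)))) :=
        (inv_mul_cancel_left₀ h2 _).symm
    _ = ((Real.sqrt a)^l)⁻¹ * ((Real.sqrt a)⁻¹ * ∫ z : ℝ, z^l * Real.exp (-(z^2/2))) := by
        rw [key]
    _ = ((Real.sqrt a)⁻¹)^(l+1) * ∫ z : ℝ, z^l * Real.exp (-(z^2/2)) := by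
        rw [pow_succ, inv_pow]; ring

lemma laplace_gauss_int (l : ℕ) :
    ∫ z : ℝ, z^l ∂(gaussianReal 0 1) =
      (Real.sqrt (2 * Real.pi))⁻¹ * ∫ z : ℝ, z^l * Real.exp (-(z^2/2)) := by
  rw [gaussianReal_of_var_ne_zero 0 one_ne_zero]
  have hmeas : Measurable fun x => Real.toNNReal (gaussianPDFReal 0 1 x) :=
    (measurable_gaussianPDFReal 0 1).real_toNNReal
  have hd : gaussianPDF 0 1 = fun x => ((Real.toNNReal (gaussianPDFReal 0 1 x) : ℝ≥0) : ℝ≥0∞) :=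
    rfl
  rw [hd, integral_withDensity_eq_integral_smul hmeas]
  have h1 : ∀ z : ℝ, Real.toNNReal (gaussianPDFReal 0 1 z) • (z^l : ℝ)
      = (Real.sqrt (2 * Real.pi))⁻¹ * (z^l * Real.exp (-(z^2/2))) := by
    intro z
    rw [NNReal.smul_def, Real.coe_toNNReal _ (gaussianPDFReal_nonneg 0 1 z), gaussianPDFReal]
    push_cast
    rw [show -(z - 0)^2/(2*(1:ℝ)) = -(z^2/2) from by ring, mul_one, smul_eq_mul]
    ring
  simp only [h1]
  rw [integral_const_mul]

theorem laplace_even_moment (a₁ a₃ b₄ : ℝ) (ha₁ : 0 < a₁) (hb₄ : 0 < b₄)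
    (hdisc : a₃^2 < 3 * a₁ * b₄) (l : ℕ) (hl : Even l) :
    Filter.Tendsto
      (fun n : ℕ => (n : ℝ)^(((l : ℝ) + 1) / 2) *
        ∫ x : ℝ, x^l * Real.exp (-(n : ℝ) * x^2 * (a₁ / 2 + a₃ * x / 6 + b₄ * x^2 / 24)))
      Filter.atTop
      (nhds (Real.sqrt (2 * Real.pi / a₁^(l+1)) * ∫ z : ℝ, z^l ∂(gaussianReal 0 1))) := by
  -- lower bound m for the quadratic factor η
  obtain ⟨m, hm, hη⟩ : ∃ m : ℝ, 0 < m ∧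
      ∀ t : ℝ, m ≤ a₁ / 2 + a₃ * t / 6 + b₄ * t^2 / 24 := by
    refine ⟨a₁/2 - a₃^2/(6*b₄), ?_, ?_⟩
    · rw [sub_pos, div_lt_div_iff₀ (by positivity) (by norm_num : (0:ℝ) < 2)]
      nlinarith
    · intro t
      have h24 : a₃ * t / 6 + b₄ * t^2 / 24 + a₃^2/(6*b₄) = (b₄*t + 2*a₃)^2 / (24*b₄) := by
        field_simp
        ring
      have hkey : 0 ≤ a₃ * t / 6 + b₄ * t^2 / 24 + a₃^2/(6*b₄) := by
        rw [h24]; positivity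
      linarith
  -- Step 2: dominated convergence for the rescaled integrals
  have step2 : Tendsto
      (fun n : ℕ => ∫ y : ℝ, y^l * Real.exp (-(y^2 *
        (a₁ / 2 + a₃ * (y / Real.sqrt n) / 6 + b₄ * (y / Real.sqrt n)^2 / 24))))
      atTop (nhds (∫ y : ℝ, y^l * Real.exp (-(y^2 * (a₁/2))))) := by
    apply MeasureTheory.tendsto_integral_of_dominated_convergence
      (fun y : ℝ => y^l * Real.exp (-m * y^2))
    · intro n
      apply Continuous.aestronglyMeasurable
      fun_prop
    · exact (integrable_rpow_mul_exp_neg_mul_sq hm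
        (s := l) (lt_of_lt_of_le neg_one_lt_zero (Nat.cast_nonneg l))).congr
        (Filter.Eventually.of_forall fun y => by simp [Real.rpow_natCast])
    · intro n
      refine Filter.Eventually.of_forall fun y => ?_
      rw [Real.norm_eq_abs, abs_mul, abs_pow, hl.pow_abs, Real.abs_exp]
      apply mul_le_mul_of_nonneg_left _ (hl.pow_nonneg y)
      apply Real.exp_le_exp.mpr
      have := mul_le_mul_of_nonneg_left (hη (y / Real.sqrt n)) (sq_nonneg y)
      linarith
    · refine Filter.Eventually.of_forall fun y => ?_
      have hcont : Continuous
          (fun t : ℝ => y^l * Real.exp (-(y^2 * (a₁ / 2 + a₃ * t / 6 + b₄ * t^2 / 24)))) := by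
        fun_prop
      have h0 : Tendsto (fun n : ℕ => y / Real.sqrt n) atTop (nhds 0) :=
        Filter.Tendsto.div_atTop tendsto_const_nhds laplace_sqrt_nat_atTop
      have := (hcont.tendsto 0).comp h0
      simpa [Function.comp_def] using this
  -- Step 3: identify the limit value
  have step3 : (∫ y : ℝ, y^l * Real.exp (-(y^2 * (a₁/2))))
      = Real.sqrt (2 * Real.pi / a₁^(l+1)) * ∫ z : ℝ, z^l ∂(gaussianReal 0 1) := by
    rw [laplace_gauss_int, laplace_aux_scale a₁ ha₁ l]
    have hsp : Real.sqrt (a₁^(l+1)) = (Real.sqrt a₁)^(l+1) := by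
      simp only [Real.sqrt_eq_rpow]
      rw [← Real.rpow_natCast a₁ (l+1), ← Real.rpow_natCast ((a₁ : ℝ)^((1:ℝ)/2)) (l+1),
        ← Real.rpow_mul ha₁.le, ← Real.rpow_mul ha₁.le, mul_comm]
    have h2π : (0:ℝ) < 2 * Real.pi := by positivity
    rw [Real.sqrt_div h2π.le, hsp]
    have hs2π : Real.sqrt (2 * Real.pi) ≠ 0 := by positivity
    have hsa : Real.sqrt a₁ ≠ 0 := by positivity
    rw [inv_pow]
    field_simp
  -- Step 1: rescale x = y / √n, valid for n ≥ 1
  have step1 : ∀ n : ℕ, 1 ≤ n →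
      (n : ℝ)^(((l : ℝ) + 1) / 2) *
        (∫ x : ℝ, x^l * Real.exp (-(n : ℝ) * x^2 * (a₁ / 2 + a₃ * x / 6 + b₄ * x^2 / 24)))
      = ∫ y : ℝ, y^l * Real.exp (-(y^2 *
        (a₁ / 2 + a₃ * (y / Real.sqrt n) / 6 + b₄ * (y / Real.sqrt n)^2 / 24))) := by
    intro n hn
    have hn0 : (0:ℝ) < n := by exact_mod_cast hn
    have hs : 0 < Real.sqrt n := Real.sqrt_pos.mpr hn0
    have hs2 : Real.sqrt n ^ 2 = (n:ℝ) := Real.sq_sqrt hn0.le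
    have hl0 : (Real.sqrt n)^l ≠ 0 := pow_ne_zero _ hs.ne'
    have key := MeasureTheory.Measure.integral_comp_mul_left
      (fun x : ℝ => x^l * Real.exp (-(n : ℝ) * x^2 * (a₁ / 2 + a₃ * x / 6 + b₄ * x^2 / 24)))
      ((Real.sqrt n)⁻¹)
    have h1 : ∀ y : ℝ,
        ((Real.sqrt n)⁻¹ * y)^l * Real.exp (-(n : ℝ) * ((Real.sqrt n)⁻¹ * y)^2 *
          (a₁ / 2 + a₃ * ((Real.sqrt n)⁻¹ * y) / 6 + b₄ * ((Real.sqrt n)⁻¹ * y)^2 / 24))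
        = ((Real.sqrt n)^l)⁻¹ * (y^l * Real.exp (-(y^2 *
          (a₁ / 2 + a₃ * (y / Real.sqrt n) / 6 + b₄ * (y / Real.sqrt n)^2 / 24)))) := by
      intro y
      rw [show (Real.sqrt n)⁻¹ * y = y / Real.sqrt n from inv_mul_eq_div _ _]
      rw [show -(n : ℝ) * (y / Real.sqrt n)^2 = -(y^2) from by
        rw [div_pow, hs2]; field_simp]
      rw [neg_mul, div_pow]
      ring
    simp only [h1] at key
    rw [integral_const_mul, inv_inv, abs_of_pos hs, smul_eq_mul] at key
    have hpow : (n:ℝ)^(((l:ℝ)+1)/2) = Real.sqrt n ^ (l+1) := by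
      rw [Real.sqrt_eq_rpow, ← Real.rpow_natCast ((n:ℝ)^((1:ℝ)/2)) (l+1),
        ← Real.rpow_mul hn0.le]
      congr 1
      push_cast
      ring
    have hF : (∫ y : ℝ, y^l * Real.exp (-(y^2 *
          (a₁ / 2 + a₃ * (y / Real.sqrt n) / 6 + b₄ * (y / Real.sqrt n)^2 / 24))))
        = (Real.sqrt n)^l * (Real.sqrt n *
          ∫ x : ℝ, x^l * Real.exp (-(n : ℝ) * x^2 * (a₁ / 2 + a₃ * x / 6 + b₄ * x^2 / 24))) := by
      rw [← key, mul_inv_cancel_left₀ hl0]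
    rw [hF, hpow, pow_succ]
    ring
  rw [step3] at step2
  refine Filter.Tendsto.congr' ?_ step2
  filter_upwards [Filter.eventually_ge_atTop 1] with n hn
  exact (step1 n hn).symm
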